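/- arXiv:2507.10387 — 2 statements merged into one kernel-verified Lean document; each statement's English description precedes it below -/
import Mathlib

section
/- Let K be a CM-field with maximal totally real subfield k and Gal(K/k) = ⟨τ⟩. Let C be a nonzero ideal of O_k, let 𝔅 be a nonzero ideal of O_K coprime to its conjugate τ(𝔅), and suppose β ∈ O_K with β·O_K = (C·O_K)·𝔅 (extension of C to O_K times 𝔅). If β/τ(β) has absolute value 1 at all archimedean places, then H(β/τ(β)) = N_{K/ℚ}(𝔅)^{1/(2N)}, where 2N = [K:ℚ]. -/
open NumberField Polynomial

variable (K : Type) [Field K] [NumberField K]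

/-- The denominator ideal of `α`: integers `x` with `x * α` integral. -/
noncomputable def denomIdeal (α : K) : Ideal (𝓞 K) where
  carrier := {x : 𝓞 K | IsIntegral ℤ ((x : K) * α)}
  add_mem' := by
    intro a b ha hb
    have h : ((a : K) + (b : K)) * α = (a : K) * α + (b : K) * α := by ring
    simpa [Set.mem_setOf_eq, h] using ha.add hb
  zero_mem' := by simpa using isIntegral_zero
  smul_mem' := by
    intro c x hx
    have h : (c : K) * (x : K) * α = (c : K) * ((x : K) * α) := by ring
    simpa [Set.mem_setOf_eq, smul_eq_mul, h] using (RingOfIntegers.isIntegral_coe c).mul hx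

/-- The absolute multiplicative Weil height of an element of the number field `K`. -/
noncomputable def mulHeight (α : K) : ℝ :=
  ((Ideal.absNorm (denomIdeal K α) : ℝ) *
      ∏ σ : K →+* ℂ, max 1 (‖σ α‖)) ^ ((Module.finrank ℚ K : ℝ)⁻¹)

set_option synthInstance.maxHeartbeats 1000000 in
set_option maxHeartbeats 1000000 in
/-- Let `K` be a CM-field of degree `2N` with maximal totally real subfield `k` and
`Gal(K/k) = ⟨τ⟩`.  Let `C` be a nonzero ideal of `O_k`, let `𝔅` be a nonzero ideal of
`O_K` coprime to its conjugate `τ(𝔅)`, and suppose `β ∈ O_K` with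
`β·O_K = (C·O_K)·𝔅`.  If `β/τ(β)` has absolute value `1` at all archimedean places,
then `H(β/τ(β)) = N_{K/ℚ}(𝔅)^(1/(2N))`, where `2N = [K:ℚ]`. -/
theorem stmt9 (k : Type) [Field k] [NumberField k]
    [Algebra k K] [Algebra (NumberField.RingOfIntegers k) (𝓞 K)]
    [IsScalarTower (NumberField.RingOfIntegers k) (𝓞 K) K]
    (hreal : ∀ φ : k →+* ℂ, ∀ x : k, (φ x).im = 0)
    (hdeg : Module.finrank k K = 2)
    (τ : K ≃ₐ[k] K) (hτ : τ ≠ (AlgEquiv.refl : K ≃ₐ[k] K))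
    (hconj : ∀ σ : K →+* ℂ, ∀ x : K, σ (τ x) = (starRingEnd ℂ) (σ x))
    (σO : 𝓞 K ≃+* 𝓞 K) (hσO : ∀ x : 𝓞 K, ((σO x : K)) = τ (x : K))
    (C : Ideal (NumberField.RingOfIntegers k)) (hC : C ≠ ⊥)
    (B : Ideal (𝓞 K)) (hB : B ≠ ⊥)
    (hcop : IsCoprime B (Ideal.map (σO : 𝓞 K →+* 𝓞 K) B))
    (β : 𝓞 K)
    (hfact : Ideal.span {β} =
      (Ideal.map (algebraMap (NumberField.RingOfIntegers k) (𝓞 K)) C) * B)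
    (harch : ∀ emb : K →+* ℂ, ‖emb ((β : K) / τ (β : K))‖ = 1) :
    mulHeight K ((β : K) / τ (β : K)) =
      (Ideal.absNorm B : ℝ) ^ ((Module.finrank ℚ K : ℝ))⁻¹ := by
  classical
  set C' : Ideal (𝓞 K) := Ideal.map (algebraMap (NumberField.RingOfIntegers k) (𝓞 K)) C with hC'def
  set Bτ : Ideal (𝓞 K) := Ideal.map (σO : 𝓞 K →+* 𝓞 K) B with hBτdef
  -- injectivity of the map 𝓞 k → 𝓞 K
  have hinjkK : Function.Injective (algebraMap (NumberField.RingOfIntegers k) K) := by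
    rw [IsScalarTower.algebraMap_eq (NumberField.RingOfIntegers k) k K]
    exact (algebraMap k K).injective.comp NumberField.RingOfIntegers.coe_injective
  have hinj : Function.Injective (algebraMap (NumberField.RingOfIntegers k) (𝓞 K)) := by
    have h := IsScalarTower.algebraMap_eq (NumberField.RingOfIntegers k) (𝓞 K) K
    have h2 : Function.Injective ((algebraMap (𝓞 K) K) ∘
        (algebraMap (NumberField.RingOfIntegers k) (𝓞 K))) := by
      rw [← RingHom.coe_comp, ← h]; exact hinjkK
    exact Function.Injective.of_comp h2
  have hC' : C' ≠ ⊥ := by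
    rw [hC'def, Ne, Ideal.map_eq_bot_iff_of_injective hinj]
    exact hC
  have hC'0 : C' ≠ 0 := hC'
  have hB0 : B ≠ 0 := hB
  have hβ0 : β ≠ 0 := by
    intro h
    rw [h] at hfact
    simp only [Set.singleton_zero, Ideal.span_zero] at hfact
    exact mul_ne_zero hC'0 hB0 hfact.symm
  have hβK : (β : K) ≠ 0 := by
    simpa using hβ0
  have hτβ : τ (β : K) ≠ 0 := by
    intro h
    exact hβK (by simpa using τ.injective (h.trans (map_zero τ).symm))
  -- σO fixes the image of 𝓞 k
  have hσOalg : ∀ c : NumberField.RingOfIntegers k,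
      σO (algebraMap (NumberField.RingOfIntegers k) (𝓞 K) c) =
        algebraMap (NumberField.RingOfIntegers k) (𝓞 K) c := by
    intro c
    apply NumberField.RingOfIntegers.coe_injective
    have h1 := hσO (algebraMap (NumberField.RingOfIntegers k) (𝓞 K) c)
    have h2 : ((algebraMap (NumberField.RingOfIntegers k) (𝓞 K) c : 𝓞 K) : K) =
        algebraMap (NumberField.RingOfIntegers k) K c :=
      (IsScalarTower.algebraMap_apply (NumberField.RingOfIntegers k) (𝓞 K) K c).symm
    have h3 : algebraMap (NumberField.RingOfIntegers k) K c =
        algebraMap k K (algebraMap (NumberField.RingOfIntegers k) k c) :=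
      IsScalarTower.algebraMap_apply (NumberField.RingOfIntegers k) k K c
    show ((σO _ : 𝓞 K) : K) = _
    rw [h1, h2, h3, AlgEquiv.commutes, ← h3, ← h2]
  have hmapC' : Ideal.map (σO : 𝓞 K →+* 𝓞 K) C' = C' := by
    rw [hC'def, Ideal.map_map]
    congr 1
    exact RingHom.ext hσOalg
  -- the span of σO β
  have hspanσ : Ideal.span {σO β} = C' * Bτ := by
    have : Ideal.span {σO β} = Ideal.map (σO : 𝓞 K →+* 𝓞 K) (Ideal.span {β}) := by
      rw [Ideal.map_span, Set.image_singleton]; rfl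
    rw [this, hfact, Ideal.map_mul, hmapC']
  -- compute the denominator ideal
  have hden : denomIdeal K ((β : K) / τ (β : K)) = Bτ := by
    ext x
    show IsIntegral ℤ ((x : K) * ((β : K) / τ (β : K))) ↔ x ∈ Bτ
    have key : IsIntegral ℤ ((x : K) * ((β : K) / τ (β : K))) ↔
        x * β ∈ Ideal.span {σO β} := by
      constructor
      · intro h
        have hy : ∃ y : 𝓞 K, (y : K) = (x : K) * ((β : K) / τ (β : K)) :=
          ⟨⟨_, h⟩, rfl⟩
        obtain ⟨y, hy⟩ := hy
        refine Ideal.mem_span_singleton'.2 ⟨y, ?_⟩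
        apply NumberField.RingOfIntegers.coe_injective
        rw [map_mul, map_mul]
        show (y : K) * ((σO β : 𝓞 K) : K) = (x : K) * (β : K)
        rw [hσO β, hy]
        field_simp
      · intro h
        obtain ⟨y, hy⟩ := Ideal.mem_span_singleton'.1 h
        have hy' : (y : K) * τ (β : K) = (x : K) * (β : K) := by
          have h5 := congrArg (algebraMap (𝓞 K) K) hy
          rw [map_mul, map_mul] at h5
          rw [← hσO β]
          exact h5
        have : (x : K) * ((β : K) / τ (β : K)) = (y : K) := by
          field_simp
          linear_combination hy'.symm
        rw [this]
        exact NumberField.RingOfIntegers.isIntegral_coe y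
    rw [key]
    have : x * β ∈ Ideal.span {σO β} ↔
        Ideal.span {σO β} ∣ Ideal.span {x} * Ideal.span {β} := by
      rw [Ideal.span_singleton_mul_span_singleton, Ideal.dvd_span_singleton]
    rw [this, hspanσ, hfact]
    have hre : Ideal.span {x} * (C' * B) = C' * (Ideal.span {x} * B) := by ring
    rw [hre, mul_dvd_mul_iff_left hC'0]
    constructor
    · intro h
      have := (hcop.symm : IsCoprime Bτ B).dvd_of_dvd_mul_right h
      exact (Ideal.dvd_span_singleton).1 this
    · intro h
      exact ((Ideal.dvd_span_singleton).2 h).mul_right B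
  -- norms agree
  have hnorm : Ideal.absNorm Bτ = Ideal.absNorm B := by
    rw [Ideal.absNorm_apply, Ideal.absNorm_apply, Submodule.cardQuot_apply,
      Submodule.cardQuot_apply]
    exact (Nat.card_congr (Ideal.quotientEquiv B Bτ σO hBτdef).toEquiv).symm
  -- the archimedean product is 1
  have hprod : ∏ σ : K →+* ℂ, max 1 (‖σ ((β : K) / τ (β : K))‖) = 1 := by
    refine Finset.prod_eq_one fun σ _ => ?_
    rw [harch σ, max_self]
  rw [mulHeight, hden, hnorm, hprod, mul_one]
end

section
/- Let K/k be a quadratic extension of number fields. Let 𝒫 be the product of the primes of O_K dividing the relative different/discriminant (i.e., the square-free part of the extended ramified primes), and let I_𝒫 be the set of nonzero ideals 𝔅 of O_K coprime to 𝒫 such that no extension A·O_K of a proper nonzero ideal A of O_k divides 𝔅. If A, A' are nonzero ideals of O_k, 𝔇, 𝔇' divide 𝒫, and 𝔅, 𝔅' ∈ I_𝒫, then (A·O_K)·𝔇·𝔅 = (A'·O_K)·𝔇'·𝔅' implies A = A', 𝔇 = 𝔇', and 𝔅 = 𝔅'. -/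
set_option maxHeartbeats 1000000


open NumberField

open UniqueFactorizationMonoid in
/-- Unique decomposition (Lemma on `I_𝒫`).  Let `K/k` be a quadratic extension of number
fields, let `P₁,…,P_s` be the primes of `O_k` ramifying in `K` with `P_i·O_K = 𝔭_i²`, and
let `𝒫 = 𝔭₁⋯𝔭_s`.  If `A, A'` are nonzero ideals of `O_k`, `𝔇, 𝔇'` divide `𝒫`, and
`𝔅, 𝔅'` lie in `I_𝒫` (nonzero, coprime to `𝒫`, with no extension `A·O_K` of a proper
nonzero ideal of `O_k` dividing them), then `(A·O_K)·𝔇·𝔅 = (A'·O_K)·𝔇'·𝔅'` implies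
`A = A'`, `𝔇 = 𝔇'` and `𝔅 = 𝔅'`. -/
theorem stmt12 (k K : Type) [Field k] [NumberField k] [Field K] [NumberField K]
    [Algebra k K] [Algebra (𝓞 k) (𝓞 K)] [IsScalarTower (𝓞 k) (𝓞 K) K]
    (hdeg : Module.finrank k K = 2)
    (s : ℕ) (P : Fin s → Ideal (𝓞 k)) (p : Fin s → Ideal (𝓞 K))
    (hP : ∀ i, (P i).IsPrime) (hPbot : ∀ i, P i ≠ ⊥)
    (hp : ∀ i, (p i).IsPrime) (hpinj : Function.Injective p)
    (hram : ∀ i, Ideal.map (algebraMap (𝓞 k) (𝓞 K)) (P i) = p i ^ 2)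
    (A A' : Ideal (𝓞 k)) (hA : A ≠ ⊥) (hA' : A' ≠ ⊥)
    (D D' : Ideal (𝓞 K)) (hD : D ∣ ∏ i, p i) (hD' : D' ∣ ∏ i, p i)
    (B B' : Ideal (𝓞 K))
    (hB : B ≠ ⊥ ∧ IsCoprime B (∏ i, p i) ∧
      ∀ A₀ : Ideal (𝓞 k), A₀ ≠ ⊥ → A₀ ≠ ⊤ →
        ¬ Ideal.map (algebraMap (𝓞 k) (𝓞 K)) A₀ ∣ B)
    (hB' : B' ≠ ⊥ ∧ IsCoprime B' (∏ i, p i) ∧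
      ∀ A₀ : Ideal (𝓞 k), A₀ ≠ ⊥ → A₀ ≠ ⊤ →
        ¬ Ideal.map (algebraMap (𝓞 k) (𝓞 K)) A₀ ∣ B')
    (heq : Ideal.map (algebraMap (𝓞 k) (𝓞 K)) A * D * B =
      Ideal.map (algebraMap (𝓞 k) (𝓞 K)) A' * D' * B') :
    A = A' ∧ D = D' ∧ B = B' := by
  classical
  obtain ⟨hB0, hBcop, hBext⟩ := hB
  obtain ⟨hB'0, hB'cop, hB'ext⟩ := hB'
  set f := algebraMap (𝓞 k) (𝓞 K) with hfdef
  -- the extension map on rings of integers is injective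
  have hfinj : Function.Injective f := by
    intro x y hxy
    apply FaithfulSMul.algebraMap_injective (𝓞 k) K
    rw [IsScalarTower.algebraMap_apply (𝓞 k) (𝓞 K) K,
      IsScalarTower.algebraMap_apply (𝓞 k) (𝓞 K) K, hxy]
  have hmapbot : ∀ I : Ideal (𝓞 k), I ≠ ⊥ → Ideal.map f I ≠ 0 := by
    intro I hI h
    rw [Submodule.zero_eq_bot] at h
    exact hI ((Ideal.map_eq_bot_iff_of_injective hfinj).mp h)
  have hA0 : A ≠ 0 := by rw [Submodule.zero_eq_bot]; exact hA
  have hA'0 : A' ≠ 0 := by rw [Submodule.zero_eq_bot]; exact hA'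
  have hB0' : B ≠ 0 := by rw [Submodule.zero_eq_bot]; exact hB0
  have hB'0' : B' ≠ 0 := by rw [Submodule.zero_eq_bot]; exact hB'0
  have hpbot : ∀ i, p i ≠ 0 := by
    intro i h
    apply hmapbot (P i) (hPbot i)
    rw [hram i, h]
    rw [pow_two, mul_zero]
  have hpprime : ∀ i, Prime (p i) := fun i => by
    refine Ideal.prime_of_isPrime ?_ (hp i)
    rw [← Submodule.zero_eq_bot]; exact hpbot i
  have hprod0 : (∏ i, p i) ≠ 0 := Finset.prod_ne_zero_iff.mpr fun i _ => hpbot i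
  have hD0 : D ≠ 0 := ne_zero_of_dvd_ne_zero hprod0 hD
  have hD'0 : D' ≠ 0 := ne_zero_of_dvd_ne_zero hprod0 hD'
  -- `p i` lies over `P i`
  have hcomap : ∀ i, Ideal.comap f (p i) = P i := by
    intro i
    have hle : P i ≤ Ideal.comap f (p i) := by
      rw [← Ideal.map_le_iff_le_comap, hram i, pow_two]
      exact Ideal.mul_le_left
    have hmax : (P i).IsMaximal := (hP i).isMaximal (hPbot i)
    exact (hmax.eq_of_le (Ideal.comap_ne_top f (hp i).ne_top) hle).symm
  -- multiplicities of `p i` in extended ideals are even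
  have heven : ∀ (i : Fin s) (I : Ideal (𝓞 k)), I ≠ 0 →
      Even (Multiset.count (p i) (normalizedFactors (Ideal.map f I))) := by
    intro i I
    induction I using UniqueFactorizationMonoid.induction_on_prime with
    | h₁ => intro h; exact absurd rfl h
    | h₂ u hu =>
      intro _
      rw [Ideal.isUnit_iff.mp hu, Ideal.map_top, Ideal.one_eq_top.symm,
        normalizedFactors_one]
      simp
    | h₃ J Q hJ hQ ih =>
      intro _
      have hmQ : Ideal.map f Q ≠ 0 := by
        apply hmapbot; rw [← Submodule.zero_eq_bot]; exact hQ.ne_zero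
      have hmJ : Ideal.map f J ≠ 0 := by
        apply hmapbot; rw [← Submodule.zero_eq_bot]; exact hJ
      rw [Ideal.map_mul, normalizedFactors_mul hmQ hmJ, Multiset.count_add]
      refine Even.add ?_ (ih hJ)
      by_cases hQP : Q = P i
      · rw [hQP, hram i, normalizedFactors_pow,
          normalizedFactors_irreducible (hpprime i).irreducible, normalize_eq,
          Multiset.count_nsmul, Multiset.count_singleton_self]
        exact even_two
      · have hzero : Multiset.count (p i) (normalizedFactors (Ideal.map f Q)) = 0 := by
          rw [Multiset.count_eq_zero]
          intro hmem
          have hdvd : p i ∣ Ideal.map f Q := dvd_of_mem_normalizedFactors hmem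
          have hle : Ideal.map f Q ≤ p i := Ideal.le_of_dvd hdvd
          have hQle : Q ≤ P i := by
            rw [← hcomap i]; exact Ideal.map_le_iff_le_comap.mp hle
          have hQmax : Q.IsMaximal := by
            refine (Ideal.isPrime_of_prime hQ).isMaximal ?_
            rw [← Submodule.zero_eq_bot]; exact hQ.ne_zero
          exact hQP (hQmax.eq_of_le (hP i).ne_top hQle)
        rw [hzero]
        exact Even.zero
  -- counting in the product of the ramified primes
  have hcprod : ∀ i : Fin s, Multiset.count (p i) (normalizedFactors (∏ j, p j)) = 1 := by
    intro i
    rw [Finset.prod_eq_multiset_prod,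
      normalizedFactors_prod_of_prime (fun q hq => by
        obtain ⟨j, _, rfl⟩ := Multiset.mem_map.mp hq
        exact hpprime j),
      Multiset.count_map_eq_count' p _ hpinj]
    exact Multiset.count_eq_one_of_mem Finset.univ.nodup (Finset.mem_univ i)
  have hcle1 : ∀ (X : Ideal (𝓞 K)), X ∣ ∏ j, p j → ∀ i,
      Multiset.count (p i) (normalizedFactors X) ≤ 1 := by
    intro X hX i
    have hX0 : X ≠ 0 := ne_zero_of_dvd_ne_zero hprod0 hX
    have := (dvd_iff_normalizedFactors_le_normalizedFactors hX0 hprod0).mp hX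
    calc Multiset.count (p i) (normalizedFactors X)
        ≤ Multiset.count (p i) (normalizedFactors (∏ j, p j)) :=
          Multiset.le_iff_count.mp this (p i)
      _ = 1 := hcprod i
  have hmemiff : ∀ (i : Fin s) (X : Ideal (𝓞 K)), X ≠ 0 →
      (p i ∣ X ↔ 1 ≤ Multiset.count (p i) (normalizedFactors X)) := by
    intro i X hX
    rw [Multiset.one_le_count_iff_mem, mem_normalizedFactors_iff hX]
    exact ⟨fun h => ⟨hpprime i, h⟩, And.right⟩
  have hcB : ∀ (i : Fin s) (X : Ideal (𝓞 K)), X ≠ 0 → IsCoprime X (∏ j, p j) →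
      Multiset.count (p i) (normalizedFactors X) = 0 := by
    intro i X hX hcop
    rw [Multiset.count_eq_zero]
    intro hmem
    have hdvd : p i ∣ X := dvd_of_mem_normalizedFactors hmem
    exact (hpprime i).not_unit
      (hcop.isUnit_of_dvd' hdvd (Finset.dvd_prod_of_mem p (Finset.mem_univ i)))
  -- the counts of `p i` in `D` and `D'` agree
  have hcDD' : ∀ i : Fin s, Multiset.count (p i) (normalizedFactors D) =
      Multiset.count (p i) (normalizedFactors D') := by
    intro i
    have hmA : Ideal.map f A ≠ 0 := hmapbot A hA
    have hmA' : Ideal.map f A' ≠ 0 := hmapbot A' hA'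
    have h1 := congrArg (fun I => Multiset.count (p i) (normalizedFactors I)) heq
    simp only [normalizedFactors_mul (mul_ne_zero hmA hD0) hB0',
      normalizedFactors_mul (mul_ne_zero hmA' hD'0) hB'0',
      normalizedFactors_mul hmA hD0, normalizedFactors_mul hmA' hD'0,
      Multiset.count_add] at h1
    obtain ⟨a, ha⟩ := heven i A hA0
    obtain ⟨a', ha'⟩ := heven i A' hA'0
    have hb : Multiset.count (p i) (normalizedFactors B) = 0 := hcB i B hB0' hBcop
    have hb' : Multiset.count (p i) (normalizedFactors B') = 0 := hcB i B' hB'0' hB'cop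
    have hd1 := hcle1 D hD i
    have hd'1 := hcle1 D' hD' i
    omega
  -- hence `D = D'`
  have hDD' : D = D' := by
    have key : ∀ (X Y : Ideal (𝓞 K)), X ∣ ∏ j, p j → Y ∣ ∏ j, p j →
        (∀ i : Fin s, Multiset.count (p i) (normalizedFactors X) =
          Multiset.count (p i) (normalizedFactors Y)) → X ∣ Y := by
      intro X Y hX hY hcnt
      have hX0 : X ≠ 0 := ne_zero_of_dvd_ne_zero hprod0 hX
      have hY0 : Y ≠ 0 := ne_zero_of_dvd_ne_zero hprod0 hY
      rw [dvd_iff_normalizedFactors_le_normalizedFactors hX0 hY0, Multiset.le_iff_count]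
      intro q
      by_cases hq : q ∈ normalizedFactors X
      · have hqprime : Prime q := prime_of_normalized_factor q hq
        have hqdvd : q ∣ ∏ j, p j := (dvd_of_mem_normalizedFactors hq).trans hX
        obtain ⟨j, _, hjd⟩ := hqprime.exists_mem_finset_dvd hqdvd
        have hqj : q = p j := associated_iff_eq.mp (hqprime.associated_of_dvd (hpprime j) hjd)
        rw [hqj, hcnt j]
      · rw [Multiset.count_eq_zero.mpr hq]
        exact Nat.zero_le _
    exact associated_iff_eq.mp
      (associated_of_dvd_dvd (key D D' hD hD' hcDD')
        (key D' D hD' hD fun i => (hcDD' i).symm))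
  -- cancel `D`
  subst hDD'
  have h2 : Ideal.map f A * B = Ideal.map f A' * B' := by
    apply mul_left_cancel₀ hD0
    calc D * (Ideal.map f A * B) = Ideal.map f A * D * B := by ring
      _ = Ideal.map f A' * D * B' := heq
      _ = D * (Ideal.map f A' * B') := by ring
  -- split off the gcd of `A` and `A'`
  obtain ⟨A₁, hA1⟩ : A ⊔ A' ∣ A := Ideal.dvd_iff_le.mpr le_sup_left
  obtain ⟨A₁', hA1'⟩ : A ⊔ A' ∣ A' := Ideal.dvd_iff_le.mpr le_sup_right
  have hGbot : A ⊔ A' ≠ 0 := by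
    intro h
    exact hA0 (by rw [hA1, h, zero_mul])
  have hcop1 : IsCoprime A₁ A₁' := by
    rw [Ideal.isCoprime_iff_sup_eq]
    by_contra hne
    obtain ⟨M, hM, hleM⟩ := Ideal.exists_le_maximal _ hne
    have h1le : A ≤ (A ⊔ A') * M :=
      calc A = (A ⊔ A') * A₁ := hA1
        _ ≤ (A ⊔ A') * M := Ideal.mul_mono_right (le_sup_left.trans hleM)
    have h2le : A' ≤ (A ⊔ A') * M :=
      calc A' = (A ⊔ A') * A₁' := hA1'
        _ ≤ (A ⊔ A') * M := Ideal.mul_mono_right (le_sup_right.trans hleM)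
    obtain ⟨C, hC⟩ : (A ⊔ A') * M ∣ (A ⊔ A') := Ideal.dvd_iff_le.mpr (sup_le h1le h2le)
    have hMC : M * C = 1 := by
      apply mul_left_cancel₀ hGbot
      rw [mul_one, ← mul_assoc]
      exact hC.symm
    exact hM.ne_top (Ideal.isUnit_iff.mp (IsUnit.of_mul_eq_one _ hMC))
  have hcop2 : IsCoprime (Ideal.map f A₁) (Ideal.map f A₁') := by
    rw [Ideal.isCoprime_iff_sup_eq] at hcop1 ⊢
    rw [← Ideal.map_sup, hcop1, Ideal.map_top]
  have hmG : Ideal.map f (A ⊔ A') ≠ 0 := by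
    apply hmapbot; rw [← Submodule.zero_eq_bot]; exact hGbot
  have h3 : Ideal.map f A₁ * B = Ideal.map f A₁' * B' := by
    apply mul_left_cancel₀ hmG
    calc Ideal.map f (A ⊔ A') * (Ideal.map f A₁ * B)
        = Ideal.map f ((A ⊔ A') * A₁) * B := by rw [Ideal.map_mul]; ring
      _ = Ideal.map f A * B := by rw [← hA1]
      _ = Ideal.map f A' * B' := h2
      _ = Ideal.map f ((A ⊔ A') * A₁') * B' := by rw [← hA1']
      _ = Ideal.map f (A ⊔ A') * (Ideal.map f A₁' * B') := by rw [Ideal.map_mul]; ring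
  have hA1top : A₁ = ⊤ := by
    by_contra hne
    have hA1bot : A₁ ≠ ⊥ := by
      intro h
      exact hA0 (by rw [hA1, h, Ideal.mul_bot, Submodule.zero_eq_bot])
    refine hB'ext A₁ hA1bot hne ?_
    have hdvd : Ideal.map f A₁ ∣ Ideal.map f A₁' * B' := ⟨B, h3.symm⟩
    exact hcop2.dvd_of_dvd_mul_left hdvd
  have hA1'top : A₁' = ⊤ := by
    by_contra hne
    have hA1'bot : A₁' ≠ ⊥ := by
      intro h
      exact hA'0 (by rw [hA1', h, Ideal.mul_bot, Submodule.zero_eq_bot])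
    refine hBext A₁' hA1'bot hne ?_
    have hdvd : Ideal.map f A₁' ∣ Ideal.map f A₁ * B := ⟨B', h3⟩
    exact hcop2.symm.dvd_of_dvd_mul_left hdvd
  have hAA' : A = A' := by
    rw [hA1top, Ideal.mul_top] at hA1
    rw [hA1'top, Ideal.mul_top] at hA1'
    exact hA1.trans hA1'.symm
  have hBB' : B = B' := by
    rw [hA1top, hA1'top, Ideal.map_top, Ideal.top_mul, Ideal.top_mul] at h3
    exact h3
  exact ⟨hAA', rfl, hBB'⟩
end
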